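/- Fix α > 0. For n ∈ ℕ let D_n = { z ∈ ℤ² : ‖z‖_∞ = n }, and for x ∈ ℝ² with x ∉ D_n define Z_n(x) = Σ_{y∈D_n} |y − x|^{−2−α}, where |·| is the Euclidean norm. Then there exists a constant a > 1, depending only on α, such that for all integers m, n ≥ 1 with m ≠ n and all x ∈ D_m: if m < n then a^{−1}·(n−m)^{−1−α} ≤ Z_n(x) ≤ a·(n−m)^{−1−α}, and if m > n then a^{−1}·n/(m·(m−n)^{1+α}) ≤ Z_n(x) ≤ a·n/(m·(m−n)^{1+α}). -/

import Mathlib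

set_option maxHeartbeats 1000000

open Finset

/-- `Z_n(x) = Σ_{z ∈ ℤ², ‖z‖_∞ = n} |z − x|^{−2−α}`, Euclidean distance, `x ∈ ℝ²`. -/
noncomputable def Zsq (α : ℝ) (n : ℕ) (x : ℝ × ℝ) : ℝ :=
  ∑' z : ℤ × ℤ, if max |z.1| |z.2| = (n : ℤ) then
    Real.sqrt (((z.1 : ℝ) - x.1) ^ 2 + ((z.2 : ℝ) - x.2) ^ 2) ^ (-(2 + α)) else 0


noncomputable def Dn (n : ℕ) : Finset (ℤ × ℤ) :=
  (Finset.Icc (-(n:ℤ)) n ×ˢ Finset.Icc (-(n:ℤ)) n).filter (fun z => max |z.1| |z.2| = (n:ℤ))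

lemma mem_Dn {n : ℕ} {z : ℤ × ℤ} : z ∈ Dn n ↔ max |z.1| |z.2| = (n:ℤ) := by
  simp only [Dn, Finset.mem_filter, Finset.mem_product, Finset.mem_Icc, and_iff_right_iff_imp]
  intro h
  have h1 : |z.1| ≤ (n:ℤ) := le_of_max_le_left (le_of_eq h)
  have h2 : |z.2| ≤ (n:ℤ) := le_of_max_le_right (le_of_eq h)
  exact ⟨abs_le.mp h1, abs_le.mp h2⟩

lemma Zsq_eq_sum (α : ℝ) (n : ℕ) (x : ℝ × ℝ) :
    Zsq α n x = ∑ z ∈ Dn n,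
      Real.sqrt (((z.1 : ℝ) - x.1) ^ 2 + ((z.2 : ℝ) - x.2) ^ 2) ^ (-(2 + α)) := by
  rw [Zsq, tsum_eq_sum (s := Dn n) (by intro z hz; rw [if_neg]; exact fun h => hz (mem_Dn.mpr h))]
  exact Finset.sum_congr rfl fun z hz => if_pos (mem_Dn.mp hz)

lemma Zsq_swap (α : ℝ) (n : ℕ) (p q : ℝ) : Zsq α n (p, q) = Zsq α n (q, p) := by
  rw [Zsq, Zsq, ← (Equiv.prodComm ℤ ℤ).tsum_eq]
  apply tsum_congr
  intro z
  simp only [Equiv.prodComm_apply, Prod.fst_swap, Prod.snd_swap]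
  simp only [max_comm, add_comm]

lemma Zsq_neg1 (α : ℝ) (n : ℕ) (p q : ℝ) : Zsq α n (-p, q) = Zsq α n (p, q) := by
  rw [Zsq, Zsq, ← (Equiv.prodCongr (Equiv.neg ℤ) (Equiv.refl ℤ)).tsum_eq]
  apply tsum_congr
  intro z
  simp only [Equiv.prodCongr_apply, Equiv.neg_apply, Equiv.refl_apply, Prod.map,
    abs_neg, Int.cast_neg]
  congr 2
  ring

lemma Zsq_neg2 (α : ℝ) (n : ℕ) (p q : ℝ) : Zsq α n (p, -q) = Zsq α n (p, q) := by
  rw [Zsq_swap, Zsq_neg1, Zsq_swap]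

lemma telescope (e : ℕ) (he : 1 ≤ e) (M : ℕ) :
    ∑ u ∈ Finset.Icc (e+1) M, ((1:ℝ)/(u-1) - 1/u) ≤ 1/e := by
  rw [← Finset.Ico_add_one_right_eq_Icc, Finset.sum_Ico_eq_sum_range]
  calc ∑ i ∈ Finset.range (M + 1 - (e+1)), ((1:ℝ)/(((e+1+i:ℕ):ℝ)-1) - 1/((e+1+i:ℕ):ℝ))
      = ∑ i ∈ Finset.range (M + 1 - (e+1)),
          ((fun j => 1/((e+j:ℕ):ℝ)) i - (fun j => 1/((e+j:ℕ):ℝ)) (i+1)) := by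
        apply Finset.sum_congr rfl
        intro i _
        push_cast
        ring_nf
    _ = (fun j => 1/((e+j:ℕ):ℝ)) 0 - (fun j => 1/((e+j:ℕ):ℝ)) (M + 1 - (e+1)) :=
        Finset.sum_range_sub' _ _
    _ ≤ 1/e := by
        simp only
        have : (0:ℝ) ≤ 1/((e + (M+1-(e+1)):ℕ):ℝ) := by positivity
        simp only [Nat.add_zero]
        linarith

lemma tailA {α : ℝ} (hα : 0 < α) {e : ℕ} (he : 1 ≤ e) (M : ℕ) :
    ∑ u ∈ Finset.Icc (e+1) M, ((u:ℝ)) ^ (-(2 + α)) ≤ (e:ℝ) ^ (-(1 + α)) := by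
  have he' : (0:ℝ) < e := by exact_mod_cast he
  have step : ∀ u ∈ Finset.Icc (e+1) M,
      ((u:ℝ)) ^ (-(2 + α)) ≤ (e:ℝ) ^ (-α) * ((1:ℝ)/(u-1) - 1/u) := by
    intro u hu
    simp only [Finset.mem_Icc] at hu
    have he1 : (1:ℝ) ≤ e := by exact_mod_cast he
    have hu1 : (1:ℝ) ≤ (u:ℝ) - 1 := by
      have : e + 1 ≤ u := hu.1
      have : (e:ℝ) + 1 ≤ u := by exact_mod_cast this
      linarith
    have hu0 : (0:ℝ) < u := by linarith
    have heu : (e:ℝ) ≤ u := by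
      have : e ≤ u := by omega
      exact_mod_cast this
    have h1 : ((u:ℝ)) ^ (-(2 + α)) = (u:ℝ) ^ (-α) * (u:ℝ) ^ (-(2:ℝ)) := by
      rw [← Real.rpow_add hu0]; ring_nf
    have h2 : (u:ℝ) ^ (-α) ≤ (e:ℝ) ^ (-α) :=
      Real.rpow_le_rpow_of_nonpos he' heu (by linarith)
    have h3 : (u:ℝ) ^ (-(2:ℝ)) ≤ (1:ℝ)/(u-1) - 1/u := by
      have hl : (u:ℝ) ^ (-(2:ℝ)) = 1/((u:ℝ)*u) := by
        rw [Real.rpow_neg hu0.le, show ((2:ℝ)) = ((2:ℕ):ℝ) by norm_num,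
          Real.rpow_natCast, one_div, sq]
      have hr : (1:ℝ)/(u-1) - 1/u = 1/(((u:ℝ)-1)*u) := by
        field_simp
        ring
      rw [hl, hr]
      gcongr
      all_goals nlinarith
    calc ((u:ℝ)) ^ (-(2 + α)) = (u:ℝ) ^ (-α) * (u:ℝ) ^ (-(2:ℝ)) := h1
      _ ≤ (e:ℝ) ^ (-α) * ((1:ℝ)/(u-1) - 1/u) :=
          mul_le_mul h2 h3 (Real.rpow_nonneg hu0.le _) (Real.rpow_nonneg he'.le _)
  calc ∑ u ∈ Finset.Icc (e+1) M, ((u:ℝ)) ^ (-(2 + α))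
      ≤ ∑ u ∈ Finset.Icc (e+1) M, (e:ℝ) ^ (-α) * ((1:ℝ)/(u-1) - 1/u) :=
        Finset.sum_le_sum step
    _ = (e:ℝ) ^ (-α) * ∑ u ∈ Finset.Icc (e+1) M, ((1:ℝ)/(u-1) - 1/u) := by
        rw [Finset.mul_sum]
    _ ≤ (e:ℝ) ^ (-α) * (1/e) :=
        mul_le_mul_of_nonneg_left (telescope e he M) (Real.rpow_nonneg he'.le _)
    _ = (e:ℝ) ^ (-(1 + α)) := by
        rw [show -(1+α) = -α + (-1) by ring, Real.rpow_add he', Real.rpow_neg_one, one_div]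

lemma sumB {α : ℝ} (hα : 0 < α) {e : ℕ} (he : 1 ≤ e) (T : Finset ℤ) :
    ∑ u ∈ T, ((max (e:ℤ) |u| : ℤ) : ℝ) ^ (-(2 + α)) ≤ 5 * (e:ℝ) ^ (-(1 + α)) := by
  classical
  have he' : (0:ℝ) < e := by exact_mod_cast he
  have he1 : (1:ℝ) ≤ e := by exact_mod_cast he
  set T1 := T.filter (fun u => |u| ≤ (e:ℤ)) with hT1
  set T2 := T.filter (fun u => ¬ |u| ≤ (e:ℤ)) with hT2
  have hsplit : T = T1 ∪ T2 := (Finset.filter_union_filter_not_eq _ T).symm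
  have hdisj : Disjoint T1 T2 := Finset.disjoint_filter_filter_not T T _
  rw [hsplit, Finset.sum_union hdisj]
  have hbound1 : ∑ u ∈ T1, ((max (e:ℤ) |u| : ℤ) : ℝ) ^ (-(2 + α)) ≤ 3 * (e:ℝ) ^ (-(1 + α)) := by
    have hval : ∀ u ∈ T1, ((max (e:ℤ) |u| : ℤ) : ℝ) ^ (-(2 + α)) = (e:ℝ) ^ (-(2 + α)) := by
      intro u hu
      simp only [hT1, Finset.mem_filter] at hu
      rw [max_eq_left hu.2]
      norm_num
    rw [Finset.sum_congr rfl hval, Finset.sum_const, nsmul_eq_mul]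
    have hcard : (T1.card : ℝ) ≤ 3 * e := by
      have hsub : T1 ⊆ Finset.Icc (-(e:ℤ)) e := by
        intro u hu
        simp only [hT1, Finset.mem_filter] at hu
        exact Finset.mem_Icc.mpr (abs_le.mp hu.2)
      have := Finset.card_le_card hsub
      rw [Int.card_Icc] at this
      have h2 : T1.card ≤ 2 * e + 1 := by
        omega
      calc (T1.card : ℝ) ≤ 2 * e + 1 := by exact_mod_cast h2
        _ ≤ 3 * e := by linarith
    have hpos : (0:ℝ) ≤ (e:ℝ) ^ (-(2 + α)) := Real.rpow_nonneg he'.le _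
    calc (T1.card : ℝ) * (e:ℝ) ^ (-(2 + α)) ≤ (3 * e) * (e:ℝ) ^ (-(2 + α)) :=
          mul_le_mul_of_nonneg_right hcard hpos
      _ = 3 * ((e:ℝ) * (e:ℝ) ^ (-(2 + α))) := by ring
      _ = 3 * (e:ℝ) ^ (-(1 + α)) := by
          rw [show ((e:ℝ)) * (e:ℝ) ^ (-(2 + α)) = (e:ℝ) ^ (1:ℝ) * (e:ℝ) ^ (-(2+α)) by
            rw [Real.rpow_one], ← Real.rpow_add he']
          congr 1
          ring
  have hbound2 : ∑ u ∈ T2, ((max (e:ℤ) |u| : ℤ) : ℝ) ^ (-(2 + α)) ≤ 2 * (e:ℝ) ^ (-(1 + α)) := by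
    have hval : ∀ u ∈ T2, ((max (e:ℤ) |u| : ℤ) : ℝ) ^ (-(2 + α))
        = (fun b : ℕ => ((b:ℝ)) ^ (-(2 + α))) u.natAbs := by
      intro u hu
      simp only [hT2, Finset.mem_filter, not_le] at hu
      rw [max_eq_right hu.2.le, Int.abs_eq_natAbs, Int.cast_natCast]
    rw [Finset.sum_congr rfl hval,
      Finset.sum_comp (s := T2) (fun b : ℕ => ((b:ℝ)) ^ (-(2 + α))) Int.natAbs]
    set M := T2.sup Int.natAbs with hM
    have himg : T2.image Int.natAbs ⊆ Finset.Icc (e+1) M := by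
      intro b hb
      rw [Finset.mem_image] at hb
      obtain ⟨u, hu, rfl⟩ := hb
      have huT2 : u ∈ T2 := hu
      simp only [hT2, Finset.mem_filter, not_le] at hu
      refine Finset.mem_Icc.mpr ⟨?_, Finset.le_sup huT2⟩
      have : (e:ℤ) < |u| := hu.2
      rw [Int.abs_eq_natAbs] at this
      exact_mod_cast this
    have hstep : ∑ b ∈ T2.image Int.natAbs, (#{a ∈ T2 | a.natAbs = b}) • ((b:ℝ)) ^ (-(2 + α))
        ≤ ∑ b ∈ T2.image Int.natAbs, 2 * ((b:ℝ)) ^ (-(2 + α)) := by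
      apply Finset.sum_le_sum
      intro b hb
      rw [nsmul_eq_mul]
      apply mul_le_mul_of_nonneg_right _ (Real.rpow_nonneg (Nat.cast_nonneg b) _)
      have : {a ∈ T2 | a.natAbs = b} ⊆ ({(b:ℤ), -(b:ℤ)} : Finset ℤ) := by
        intro u hu
        simp only [Finset.mem_filter] at hu
        simp only [Finset.mem_insert, Finset.mem_singleton]
        omega
      have := Finset.card_le_card this
      have h2 : ({(b:ℤ), -(b:ℤ)} : Finset ℤ).card ≤ 2 := Finset.card_insert_le _ _ |>.trans (by simp)
      calc (#{a ∈ T2 | a.natAbs = b} : ℝ) ≤ (({(b:ℤ), -(b:ℤ)} : Finset ℤ).card : ℝ) := by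
            exact_mod_cast Finset.card_le_card ‹_›
        _ ≤ 2 := by exact_mod_cast h2
    calc ∑ b ∈ T2.image Int.natAbs, (#{a ∈ T2 | a.natAbs = b}) • ((b:ℝ)) ^ (-(2 + α))
        ≤ ∑ b ∈ T2.image Int.natAbs, 2 * ((b:ℝ)) ^ (-(2 + α)) := hstep
      _ = 2 * ∑ b ∈ T2.image Int.natAbs, ((b:ℝ)) ^ (-(2 + α)) := by rw [Finset.mul_sum]
      _ ≤ 2 * ∑ b ∈ Finset.Icc (e+1) M, ((b:ℝ)) ^ (-(2 + α)) := by
          apply mul_le_mul_of_nonneg_left _ (by norm_num)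
          exact Finset.sum_le_sum_of_subset_of_nonneg himg
            (fun b _ _ => Real.rpow_nonneg (Nat.cast_nonneg b) _)
      _ ≤ 2 * (e:ℝ) ^ (-(1 + α)) :=
          mul_le_mul_of_nonneg_left (tailA hα he M) (by norm_num)
  linarith

lemma abs_le_sqrt_sq_add_sq (a b : ℝ) : |a| ≤ Real.sqrt (a^2 + b^2) := by
  rw [← Real.sqrt_sq_eq_abs]
  exact Real.sqrt_le_sqrt (by nlinarith)

lemma abs_le_sqrt_sq_add_sq' (a b : ℝ) : |b| ≤ Real.sqrt (a^2 + b^2) := by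
  rw [← Real.sqrt_sq_eq_abs]
  exact Real.sqrt_le_sqrt (by nlinarith)

lemma side {α : ℝ} (hα : 0 < α) (n : ℕ) {d : ℕ} (hd : 1 ≤ d) (c w : ℤ)
    (hyp : ∀ s : ℤ, s ∈ Finset.Icc (-(n:ℤ)) n → (d:ℤ) ≤ max |c| |s - w|) :
    ∑ s ∈ Finset.Icc (-(n:ℤ)) n, Real.sqrt (((c:ℝ))^2 + ((s:ℝ) - (w:ℝ))^2) ^ (-(2+α))
      ≤ 5 * (d:ℝ) ^ (-(1+α)) := by
  set e : ℕ := max |c|.toNat d with hedef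
  have he : 1 ≤ e := le_max_of_le_right hd
  have heZ : (e:ℤ) = max |c| d := by
    simp only [hedef]
    push_cast [Int.toNat_of_nonneg (abs_nonneg c)]
    rfl
  have key : ∀ s : ℤ, s ∈ Finset.Icc (-(n:ℤ)) n →
      Real.sqrt (((c:ℝ))^2 + ((s:ℝ) - (w:ℝ))^2) ^ (-(2+α))
        ≤ ((max (e:ℤ) |s - w| : ℤ) : ℝ) ^ (-(2+α)) := by
    intro s hs
    have h1 : (d:ℤ) ≤ max |c| |s - w| := hyp s hs
    have hmax : (max (e:ℤ) |s - w|) = max |c| |s - w| := by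
      rw [heZ]
      omega
    rw [hmax]
    have hw : (0:ℝ) < ((max |c| |s - w| : ℤ):ℝ) := by
      have : (1:ℤ) ≤ max |c| |s - w| := le_trans (by exact_mod_cast hd) h1
      exact_mod_cast lt_of_lt_of_le zero_lt_one this
    apply Real.rpow_le_rpow_of_nonpos hw _ (by linarith)
    -- max |c| |s-w| ≤ sqrt(c² + (s-w)²)
    have hc : |(c:ℝ)| ≤ Real.sqrt (((c:ℝ))^2 + ((s:ℝ) - (w:ℝ))^2) := abs_le_sqrt_sq_add_sq _ _
    have hsw : |((s:ℝ) - (w:ℝ))| ≤ Real.sqrt (((c:ℝ))^2 + ((s:ℝ) - (w:ℝ))^2) :=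
      abs_le_sqrt_sq_add_sq' _ _
    have hcast : ((max |c| |s - w| : ℤ):ℝ) = max |(c:ℝ)| |((s:ℝ) - (w:ℝ))| := by
      push_cast
      rfl
    rw [hcast]
    exact max_le hc hsw
  calc ∑ s ∈ Finset.Icc (-(n:ℤ)) n, Real.sqrt (((c:ℝ))^2 + ((s:ℝ) - (w:ℝ))^2) ^ (-(2+α))
      ≤ ∑ s ∈ Finset.Icc (-(n:ℤ)) n, ((max (e:ℤ) |s - w| : ℤ) : ℝ) ^ (-(2+α)) :=
        Finset.sum_le_sum key
    _ = ∑ u ∈ (Finset.Icc (-(n:ℤ)) n).image (fun s => s - w),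
          ((max (e:ℤ) |u| : ℤ) : ℝ) ^ (-(2+α)) := by
        rw [Finset.sum_image (fun a _ b _ h => by omega)]
    _ ≤ 5 * (e:ℝ) ^ (-(1+α)) := sumB hα he _
    _ ≤ 5 * (d:ℝ) ^ (-(1+α)) := by
        apply mul_le_mul_of_nonneg_left _ (by norm_num)
        apply Real.rpow_le_rpow_of_nonpos (by exact_mod_cast hd) (by exact_mod_cast le_max_right |c|.toNat d) (by linarith)

lemma linf_lower {m n : ℕ} {z x : ℤ × ℤ} (hz : max |z.1| |z.2| = (n:ℤ))
    (hx : max |x.1| |x.2| = (m:ℤ)) :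
    ((max m n - min m n : ℕ) : ℤ) ≤ max |z.1 - x.1| |z.2 - x.2| := by
  simp only [Int.abs_eq_natAbs] at *
  omega

lemma term_nonneg (α a : ℝ) : 0 ≤ Real.sqrt a ^ (-(2+α)) :=
  Real.rpow_nonneg (Real.sqrt_nonneg a) _

lemma upper {α : ℝ} (hα : 0 < α) {m n : ℕ} (hm : 1 ≤ m) (hn : 1 ≤ n) (hmn : m ≠ n)
    (x : ℤ × ℤ) (hx : max |x.1| |x.2| = (m:ℤ)) :
    Zsq α n ((x.1:ℝ), (x.2:ℝ)) ≤ 20 * ((max m n - min m n : ℕ):ℝ) ^ (-(1+α)) := by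
  set d : ℕ := max m n - min m n with hddef
  have hd : 1 ≤ d := by omega
  set g : ℤ × ℤ → ℝ := fun z =>
    Real.sqrt (((z.1 : ℝ) - (x.1:ℝ)) ^ 2 + ((z.2 : ℝ) - (x.2:ℝ)) ^ 2) ^ (-(2 + α)) with hg
  have hgnn : ∀ z : ℤ × ℤ, 0 ≤ g z := fun z => term_nonneg α _
  rw [Zsq_eq_sum]
  have vert : ∀ cv : ℤ, |cv| = (n:ℤ) →
      ∑ s ∈ Finset.Icc (-(n:ℤ)) n, g (cv, s) ≤ 5 * (d:ℝ) ^ (-(1+α)) := by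
    intro cv hcv
    have := side hα n hd (cv - x.1) x.2 (fun s hs => by
      have hzn : max |(cv, s).1| |(cv, s).2| = (n:ℤ) := by
        simp only [Finset.mem_Icc] at hs
        simp only [hcv.symm]
        rw [max_eq_left (by rw [hcv]; exact abs_le.mpr hs)]
      exact linf_lower (m := m) (n := n) hzn hx)
    refine le_trans (le_of_eq ?_) this
    apply Finset.sum_congr rfl
    intro s _
    simp only [hg]
    push_cast
    ring_nf
  have horiz : ∀ cv : ℤ, |cv| = (n:ℤ) →
      ∑ s ∈ Finset.Icc (-(n:ℤ)) n, g (s, cv) ≤ 5 * (d:ℝ) ^ (-(1+α)) := by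
    intro cv hcv
    have := side hα n hd (cv - x.2) x.1 (fun s hs => by
      have hzn : max |(s, cv).1| |(s, cv).2| = (n:ℤ) := by
        simp only [Finset.mem_Icc] at hs
        rw [max_eq_right (by rw [hcv]; exact abs_le.mpr hs)]
        exact hcv
      exact (linf_lower (m := m) (n := n) hzn hx).trans (le_of_eq (max_comm _ _)))
    refine le_trans (le_of_eq ?_) this
    apply Finset.sum_congr rfl
    intro s _
    simp only [hg]
    push_cast
    ring_nf
  -- Dn n ⊆ B1 ∪ B2
  set B1 : Finset (ℤ × ℤ) := ({-(n:ℤ), (n:ℤ)} : Finset ℤ) ×ˢ Finset.Icc (-(n:ℤ)) n with hB1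
  set B2 : Finset (ℤ × ℤ) := Finset.Icc (-(n:ℤ)) n ×ˢ ({-(n:ℤ), (n:ℤ)} : Finset ℤ) with hB2
  have hsub : Dn n ⊆ B1 ∪ B2 := by
    intro z hz
    rw [mem_Dn] at hz
    have h1 : |z.1| ≤ (n:ℤ) := le_of_max_le_left (le_of_eq hz)
    have h2 : |z.2| ≤ (n:ℤ) := le_of_max_le_right (le_of_eq hz)
    rw [Finset.mem_union, hB1, hB2, Finset.mem_product, Finset.mem_product,
      Finset.mem_insert, Finset.mem_insert, Finset.mem_singleton, Finset.mem_singleton,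
      Finset.mem_Icc, Finset.mem_Icc]
    have hn0 : (0:ℤ) ≤ n := by positivity
    have : |z.1| = (n:ℤ) ∨ |z.2| = (n:ℤ) := by
      rcases max_choice |z.1| |z.2| with h | h <;> [left; right] <;> omega
    rcases this with h | h
    · left
      rcases (abs_eq hn0).mp h with h' | h'
      · exact ⟨Or.inr h', abs_le.mp h2⟩
      · exact ⟨Or.inl h', abs_le.mp h2⟩
    · right
      rcases (abs_eq hn0).mp h with h' | h'
      · exact ⟨abs_le.mp h1, Or.inr h'⟩
      · exact ⟨abs_le.mp h1, Or.inl h'⟩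
  calc ∑ z ∈ Dn n, g z ≤ ∑ z ∈ B1 ∪ B2, g z :=
        Finset.sum_le_sum_of_subset_of_nonneg hsub (fun z _ _ => hgnn z)
    _ ≤ ∑ z ∈ B1, g z + ∑ z ∈ B2, g z := by
        have := Finset.sum_union_inter (s₁ := B1) (s₂ := B2) (f := g)
        have hnn : 0 ≤ ∑ z ∈ B1 ∩ B2, g z := Finset.sum_nonneg (fun z _ => hgnn z)
        linarith
    _ ≤ (5 * (d:ℝ) ^ (-(1+α)) + 5 * (d:ℝ) ^ (-(1+α)))
        + (5 * (d:ℝ) ^ (-(1+α)) + 5 * (d:ℝ) ^ (-(1+α))) := by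
        have e1 : ∑ z ∈ B1, g z = ∑ c ∈ ({-(n:ℤ), (n:ℤ)} : Finset ℤ),
            ∑ s ∈ Finset.Icc (-(n:ℤ)) n, g (c, s) := Finset.sum_product _ _ _
        have e2 : ∑ z ∈ B2, g z = ∑ s ∈ Finset.Icc (-(n:ℤ)) n,
            ∑ c ∈ ({-(n:ℤ), (n:ℤ)} : Finset ℤ), g (s, c) := Finset.sum_product _ _ _
        have hne : -(n:ℤ) ≠ (n:ℤ) := by omega
        have e1' : ∑ z ∈ B1, g z = ∑ s ∈ Finset.Icc (-(n:ℤ)) n, g (-(n:ℤ), s)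
            + ∑ s ∈ Finset.Icc (-(n:ℤ)) n, g ((n:ℤ), s) := by
          rw [e1, Finset.sum_insert (by simpa using hne), Finset.sum_singleton]
        have e2' : ∑ z ∈ B2, g z = ∑ s ∈ Finset.Icc (-(n:ℤ)) n, g (s, -(n:ℤ))
            + ∑ s ∈ Finset.Icc (-(n:ℤ)) n, g (s, (n:ℤ)) := by
          rw [e2]
          rw [Finset.sum_comm]
          rw [Finset.sum_insert (by simpa using hne), Finset.sum_singleton]
        have habs : |(-(n:ℤ))| = (n:ℤ) := by simp
        have habs' : |(n:ℤ)| = (n:ℤ) := by simp [abs_of_nonneg]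
        have v1 := vert _ habs
        have v2 := vert _ habs'
        have h1 := horiz _ habs
        have h2 := horiz _ habs'
        rw [e1', e2']
        gcongr <;> assumption
    _ = 20 * ((d:ℕ):ℝ) ^ (-(1+α)) := by ring

lemma card_Dn (n : ℕ) (hn : 1 ≤ n) : (Dn n).card ≤ 12 * n := by
  have hsub : Dn n ⊆ (({-(n:ℤ), (n:ℤ)} : Finset ℤ) ×ˢ Finset.Icc (-(n:ℤ)) n)
      ∪ (Finset.Icc (-(n:ℤ)) n ×ˢ ({-(n:ℤ), (n:ℤ)} : Finset ℤ)) := by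
    intro z hz
    rw [mem_Dn] at hz
    have h1 : |z.1| ≤ (n:ℤ) := le_of_max_le_left (le_of_eq hz)
    have h2 : |z.2| ≤ (n:ℤ) := le_of_max_le_right (le_of_eq hz)
    have hn0 : (0:ℤ) ≤ n := by positivity
    rw [Finset.mem_union, Finset.mem_product, Finset.mem_product,
      Finset.mem_insert, Finset.mem_insert, Finset.mem_singleton, Finset.mem_singleton,
      Finset.mem_Icc, Finset.mem_Icc]
    have : |z.1| = (n:ℤ) ∨ |z.2| = (n:ℤ) := by
      rcases max_choice |z.1| |z.2| with h | h <;> [left; right] <;> omega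
    rcases this with h | h
    · left
      rcases (abs_eq hn0).mp h with h' | h'
      · exact ⟨Or.inr h', abs_le.mp h2⟩
      · exact ⟨Or.inl h', abs_le.mp h2⟩
    · right
      rcases (abs_eq hn0).mp h with h' | h'
      · exact ⟨abs_le.mp h1, Or.inr h'⟩
      · exact ⟨abs_le.mp h1, Or.inl h'⟩
  have := Finset.card_le_card hsub
  have h1 := Finset.card_union_le (({-(n:ℤ), (n:ℤ)} : Finset ℤ) ×ˢ Finset.Icc (-(n:ℤ)) n)
      (Finset.Icc (-(n:ℤ)) n ×ˢ ({-(n:ℤ), (n:ℤ)} : Finset ℤ))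
  have hc1 : (({-(n:ℤ), (n:ℤ)} : Finset ℤ) ×ˢ Finset.Icc (-(n:ℤ)) n).card ≤ 2 * (2*n+1) := by
    rw [Finset.card_product]
    have : ({-(n:ℤ), (n:ℤ)} : Finset ℤ).card ≤ 2 :=
      (Finset.card_insert_le _ _).trans (by simp)
    have h2 : (Finset.Icc (-(n:ℤ)) n).card = 2*n+1 := by
      rw [Int.card_Icc]
      omega
    calc _ ≤ 2 * (Finset.Icc (-(n:ℤ)) n).card := Nat.mul_le_mul_right _ this
      _ = 2 * (2*n+1) := by rw [h2]
  have hc2 : (Finset.Icc (-(n:ℤ)) n ×ˢ ({-(n:ℤ), (n:ℤ)} : Finset ℤ)).card ≤ (2*n+1) * 2 := by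
    rw [Finset.card_product]
    have : ({-(n:ℤ), (n:ℤ)} : Finset ℤ).card ≤ 2 :=
      (Finset.card_insert_le _ _).trans (by simp)
    have h2 : (Finset.Icc (-(n:ℤ)) n).card = 2*n+1 := by
      rw [Int.card_Icc]
      omega
    calc _ ≤ (Finset.Icc (-(n:ℤ)) n).card * 2 := Nat.mul_le_mul_left _ this
      _ = (2*n+1) * 2 := by rw [h2]
  omega

lemma crude {α : ℝ} (hα : 0 < α) {m n : ℕ} (hn : 1 ≤ n) (hmn : n < m)
    (x : ℤ × ℤ) (hx : max |x.1| |x.2| = (m:ℤ)) :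
    Zsq α n ((x.1:ℝ), (x.2:ℝ)) ≤ (12 * n : ℝ) * ((m - n : ℕ):ℝ) ^ (-(2+α)) := by
  set d : ℕ := m - n with hddef
  have hd : 1 ≤ d := by omega
  have hd' : (1:ℝ) ≤ (d:ℝ) := by exact_mod_cast hd
  rw [Zsq_eq_sum]
  have hterm : ∀ z ∈ Dn n,
      Real.sqrt (((z.1:ℝ) - (x.1:ℝ))^2 + ((z.2:ℝ) - (x.2:ℝ))^2) ^ (-(2+α))
        ≤ ((d:ℕ):ℝ) ^ (-(2+α)) := by
    intro z hz
    rw [mem_Dn] at hz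
    have hZ : ((max m n - min m n : ℕ) : ℤ) ≤ max |z.1 - x.1| |z.2 - x.2| :=
      linf_lower hz hx
    have hdz : (d:ℤ) ≤ max |z.1 - x.1| |z.2 - x.2| := by
      have : max m n - min m n = d := by omega
      rwa [this] at hZ
    apply Real.rpow_le_rpow_of_nonpos (by linarith) _ (by linarith)
    rcases le_total |z.1 - x.1| |z.2 - x.2| with h | h
    · rw [max_eq_right h] at hdz
      calc (d:ℝ) ≤ ((|z.2 - x.2| : ℤ):ℝ) := by exact_mod_cast hdz
        _ = |((z.2:ℝ) - (x.2:ℝ))| := by push_cast; rfl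
        _ ≤ _ := abs_le_sqrt_sq_add_sq' _ _
    · rw [max_eq_left h] at hdz
      calc (d:ℝ) ≤ ((|z.1 - x.1| : ℤ):ℝ) := by exact_mod_cast hdz
        _ = |((z.1:ℝ) - (x.1:ℝ))| := by push_cast; rfl
        _ ≤ _ := abs_le_sqrt_sq_add_sq _ _
  calc ∑ z ∈ Dn n, Real.sqrt (((z.1:ℝ) - (x.1:ℝ))^2 + ((z.2:ℝ) - (x.2:ℝ))^2) ^ (-(2+α))
      ≤ ∑ _z ∈ Dn n, ((d:ℕ):ℝ) ^ (-(2+α)) := Finset.sum_le_sum hterm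
    _ = ((Dn n).card : ℝ) * ((d:ℕ):ℝ) ^ (-(2+α)) := by
        rw [Finset.sum_const, nsmul_eq_mul]
    _ ≤ (12 * n : ℝ) * ((d:ℕ):ℝ) ^ (-(2+α)) := by
        apply mul_le_mul_of_nonneg_right _ (Real.rpow_nonneg (by positivity) _)
        exact_mod_cast card_Dn n hn

lemma lowerCore {α : ℝ} (hα : 0 < α) {n : ℕ} (T : Finset (ℤ × ℤ)) (hT : T ⊆ Dn n)
    (x1 x2 R : ℝ) (hR : 0 < R)
    (hdist : ∀ z ∈ T, (1:ℝ) ≤ Real.sqrt (((z.1:ℝ) - x1)^2 + ((z.2:ℝ) - x2)^2)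
      ∧ Real.sqrt (((z.1:ℝ) - x1)^2 + ((z.2:ℝ) - x2)^2) ≤ R) :
    (T.card : ℝ) * R ^ (-(2+α)) ≤ Zsq α n (x1, x2) := by
  rw [Zsq_eq_sum]
  calc (T.card : ℝ) * R ^ (-(2+α))
      = ∑ _z ∈ T, R ^ (-(2+α)) := by rw [Finset.sum_const, nsmul_eq_mul]
    _ ≤ ∑ z ∈ T, Real.sqrt (((z.1:ℝ) - x1)^2 + ((z.2:ℝ) - x2)^2) ^ (-(2+α)) := by
        apply Finset.sum_le_sum
        intro z hz
        obtain ⟨h1, h2⟩ := hdist z hz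
        exact Real.rpow_le_rpow_of_nonpos (by linarith) h2 (by linarith)
    _ ≤ ∑ z ∈ Dn n, Real.sqrt (((z.1:ℝ) - x1)^2 + ((z.2:ℝ) - x2)^2) ^ (-(2+α)) :=
        Finset.sum_le_sum_of_subset_of_nonneg hT (fun z _ _ => term_nonneg α _)

lemma lowerA {α : ℝ} (hα : 0 < α) {m n : ℕ} (hm : 1 ≤ m) (hn : 1 ≤ n) (hmn : m ≠ n)
    (hdn : max m n - min m n ≤ n) (b : ℤ) (hb0 : 0 ≤ b) (hbm : b ≤ (m:ℤ)) :
    ((max m n - min m n : ℕ):ℝ) * (3 * ((max m n - min m n : ℕ):ℝ)) ^ (-(2+α))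
      ≤ Zsq α n ((m:ℝ), (b:ℝ)) := by
  set d : ℕ := max m n - min m n with hddef
  have hd : 1 ≤ d := by omega
  have hd' : (1:ℝ) ≤ (d:ℝ) := by exact_mod_cast hd
  have hdnZ : (d:ℤ) ≤ (n:ℤ) := by exact_mod_cast hdn
  set c : ℤ := min b (n:ℤ) with hcdef
  set T : Finset (ℤ × ℤ) := (Finset.Ico (0:ℤ) d).image (fun t => ((n:ℤ), c - t)) with hTdef
  have hTsub : T ⊆ Dn n := by
    intro z hz
    rw [hTdef, Finset.mem_image] at hz
    obtain ⟨t, ht, rfl⟩ := hz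
    rw [Finset.mem_Ico] at ht
    rw [mem_Dn]
    have h2 : |c - t| ≤ (n:ℤ) := abs_le.mpr ⟨by omega, by omega⟩
    have h1 : |(n:ℤ)| = (n:ℤ) := abs_of_nonneg (by positivity)
    simp only
    rw [h1]
    exact max_eq_left h2
  have hcard : T.card = d := by
    rw [hTdef, Finset.card_image_of_injective _ (fun a b h => by
      simp only [Prod.mk.injEq] at h
      omega), Int.card_Ico]
    simp
  have hdist : ∀ z ∈ T, (1:ℝ) ≤ Real.sqrt (((z.1:ℝ) - (m:ℝ))^2 + ((z.2:ℝ) - (b:ℝ))^2)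
      ∧ Real.sqrt (((z.1:ℝ) - (m:ℝ))^2 + ((z.2:ℝ) - (b:ℝ))^2) ≤ 3 * (d:ℝ) := by
    intro z hz
    rw [hTdef, Finset.mem_image] at hz
    obtain ⟨t, ht, rfl⟩ := hz
    rw [Finset.mem_Ico] at ht
    simp only
    have hnm : (((n:ℤ):ℝ) - ((m:ℕ):ℝ))^2 = (d:ℝ)^2 := by
      have hZ : ((n:ℤ) - (m:ℤ))^2 = ((d:ℤ))^2 := by
        have : (n:ℤ) - m = d ∨ (m:ℤ) - n = d := by omega
        rcases this with h | h <;> nlinarith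
      have := congrArg (fun u : ℤ => (u:ℝ)) hZ
      push_cast at this
      push_cast
      linarith
    have hbc : (0:ℤ) ≤ b - c ∧ (b:ℤ) - c ≤ d := ⟨by omega, by omega⟩
    have habsZ : |c - t - b| ≤ 2 * (d:ℤ) := abs_le.mpr ⟨by omega, by omega⟩
    have habs : |((c - t : ℤ):ℝ) - (b:ℝ)| ≤ 2 * (d:ℝ) := by
      have e1 : ((c - t : ℤ):ℝ) - (b:ℝ) = ((c - t - b : ℤ) : ℝ) := by push_cast; ring
      rw [e1, ← Int.cast_abs]
      exact_mod_cast habsZ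
    have h2 : (((c - t : ℤ):ℝ) - (b:ℝ))^2 ≤ 4 * (d:ℝ)^2 := by
      nlinarith [abs_nonneg (((c - t : ℤ):ℝ) - (b:ℝ)), sq_abs (((c - t : ℤ):ℝ) - (b:ℝ))]
    constructor
    · rw [show (1:ℝ) = Real.sqrt 1 by simp]
      apply Real.sqrt_le_sqrt
      nlinarith [sq_nonneg (((c - t : ℤ):ℝ) - (b:ℝ)), sq_nonneg ((d:ℝ) - 1)]
    · rw [show (3:ℝ) * d = Real.sqrt ((3*(d:ℝ))^2) by
        rw [Real.sqrt_sq (by positivity)]]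
      apply Real.sqrt_le_sqrt
      nlinarith [sq_nonneg (d:ℝ)]
  have := lowerCore hα T hTsub (m:ℝ) (b:ℝ) (3 * (d:ℝ)) (by positivity) hdist
  rw [hcard] at this
  exact this

lemma lowerB {α : ℝ} (hα : 0 < α) {m n : ℕ} (hn : 1 ≤ n) (h2n : 2*n < m)
    (b : ℤ) (hb0 : 0 ≤ b) (hbm : b ≤ (m:ℤ)) :
    ((n:ℕ):ℝ) * (4 * ((m - n : ℕ):ℝ)) ^ (-(2+α)) ≤ Zsq α n ((m:ℝ), (b:ℝ)) := by
  set d : ℕ := m - n with hddef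
  have hd : 1 ≤ d := by omega
  have hd' : (1:ℝ) ≤ (d:ℝ) := by exact_mod_cast hd
  set T : Finset (ℤ × ℤ) := (Finset.Ico (0:ℤ) n).image (fun t => ((n:ℤ), t)) with hTdef
  have hTsub : T ⊆ Dn n := by
    intro z hz
    rw [hTdef, Finset.mem_image] at hz
    obtain ⟨t, ht, rfl⟩ := hz
    rw [Finset.mem_Ico] at ht
    rw [mem_Dn]
    have h2 : |t| ≤ (n:ℤ) := abs_le.mpr ⟨by omega, by omega⟩
    have h1 : |(n:ℤ)| = (n:ℤ) := abs_of_nonneg (by positivity)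
    simp only
    rw [h1]
    exact max_eq_left h2
  have hcard : T.card = n := by
    rw [hTdef, Finset.card_image_of_injective _ (fun a b h => by
      simp only [Prod.mk.injEq] at h
      omega), Int.card_Ico]
    simp
  have hdist : ∀ z ∈ T, (1:ℝ) ≤ Real.sqrt (((z.1:ℝ) - (m:ℝ))^2 + ((z.2:ℝ) - (b:ℝ))^2)
      ∧ Real.sqrt (((z.1:ℝ) - (m:ℝ))^2 + ((z.2:ℝ) - (b:ℝ))^2) ≤ 4 * (d:ℝ) := by
    intro z hz
    rw [hTdef, Finset.mem_image] at hz
    obtain ⟨t, ht, rfl⟩ := hz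
    rw [Finset.mem_Ico] at ht
    simp only
    have hnm : (((n:ℤ):ℝ) - ((m:ℕ):ℝ))^2 = (d:ℝ)^2 := by
      have hZ : ((n:ℤ) - (m:ℤ))^2 = ((d:ℤ))^2 := by
        have : (m:ℤ) - n = d := by omega
        nlinarith
      have := congrArg (fun u : ℤ => (u:ℝ)) hZ
      push_cast at this
      push_cast
      linarith
    have habsZ : |t - b| ≤ (m:ℤ) := abs_le.mpr ⟨by omega, by omega⟩
    have hm2d : (m:ℝ) ≤ 2*(d:ℝ) - 1 := by
      have : (m:ℤ) ≤ 2*(d:ℤ) - 1 := by omega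
      exact_mod_cast this
    have habs : |((t : ℤ):ℝ) - (b:ℝ)| ≤ (m:ℝ) := by
      have e1 : ((t : ℤ):ℝ) - (b:ℝ) = ((t - b : ℤ) : ℝ) := by push_cast; ring
      rw [e1, ← Int.cast_abs]
      exact_mod_cast habsZ
    have h2 : (((t : ℤ):ℝ) - (b:ℝ))^2 ≤ (2*(d:ℝ))^2 := by
      nlinarith [abs_nonneg (((t:ℤ):ℝ) - (b:ℝ)), sq_abs (((t:ℤ):ℝ) - (b:ℝ))]
    constructor
    · rw [show (1:ℝ) = Real.sqrt 1 by simp]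
      apply Real.sqrt_le_sqrt
      nlinarith [sq_nonneg (((t : ℤ):ℝ) - (b:ℝ)), sq_nonneg ((d:ℝ) - 1)]
    · rw [show (4:ℝ) * d = Real.sqrt ((4*(d:ℝ))^2) by
        rw [Real.sqrt_sq (by positivity)]]
      apply Real.sqrt_le_sqrt
      nlinarith [sq_nonneg (d:ℝ)]
  have := lowerCore hα T hTsub (m:ℝ) (b:ℝ) (4 * (d:ℝ)) (by positivity) hdist
  rw [hcard] at this
  exact this

lemma reduce (α : ℝ) (n m : ℕ) (x : ℤ × ℤ) (hx : max |x.1| |x.2| = (m:ℤ)) :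
    ∃ b : ℤ, 0 ≤ b ∧ b ≤ (m:ℤ) ∧
      Zsq α n ((x.1:ℝ), (x.2:ℝ)) = Zsq α n ((m:ℝ), (b:ℝ)) := by
  have step1 : Zsq α n ((x.1:ℝ), (x.2:ℝ)) = Zsq α n (((|x.1|:ℤ):ℝ), (x.2:ℝ)) := by
    rcases abs_choice x.1 with h | h
    · rw [h]
    · rw [h]
      push_cast
      rw [Zsq_neg1]
  have step2 : Zsq α n (((|x.1|:ℤ):ℝ), (x.2:ℝ))
      = Zsq α n (((|x.1|:ℤ):ℝ), ((|x.2|:ℤ):ℝ)) := by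
    rcases abs_choice x.2 with h | h
    · rw [h]
    · rw [h]
      push_cast
      rw [Zsq_neg2]
  have h1 : |x.1| ≤ (m:ℤ) := le_of_max_le_left (le_of_eq hx)
  have h2 : |x.2| ≤ (m:ℤ) := le_of_max_le_right (le_of_eq hx)
  rcases max_choice |x.1| |x.2| with h | h
  · refine ⟨|x.2|, abs_nonneg _, h2, ?_⟩
    rw [step1, step2]
    rw [hx] at h
    rw [← h]
    norm_num
  · refine ⟨|x.1|, abs_nonneg _, h1, ?_⟩
    rw [step1, step2, Zsq_swap]
    rw [hx] at h
    rw [← h]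
    norm_num

/-- two-sided bounds on `Z_n(x)` for `x ∈ D_m = {z ∈ ℤ² : ‖z‖_∞ = m}`, `m ≠ n`. -/
theorem Zsq_bounds (α : ℝ) (hα : 0 < α) :
    ∃ a : ℝ, 1 < a ∧ ∀ m n : ℕ, 1 ≤ m → 1 ≤ n → m ≠ n →
      ∀ x : ℤ × ℤ, max |x.1| |x.2| = (m : ℤ) →
      (m < n →
        a⁻¹ * ((n : ℝ) - (m : ℝ)) ^ (-(1 + α)) ≤ Zsq α n ((x.1 : ℝ), (x.2 : ℝ)) ∧
        Zsq α n ((x.1 : ℝ), (x.2 : ℝ)) ≤ a * ((n : ℝ) - (m : ℝ)) ^ (-(1 + α))) ∧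
      (n < m →
        a⁻¹ * ((n : ℝ) / ((m : ℝ) * ((m : ℝ) - (n : ℝ)) ^ (1 + α))) ≤
            Zsq α n ((x.1 : ℝ), (x.2 : ℝ)) ∧
        Zsq α n ((x.1 : ℝ), (x.2 : ℝ)) ≤
          a * ((n : ℝ) / ((m : ℝ) * ((m : ℝ) - (n : ℝ)) ^ (1 + α)))) := by
  have h4 : (1:ℝ) ≤ (4:ℝ) ^ (2+α) := Real.one_le_rpow (by norm_num) (by linarith)
  have h4pos : (0:ℝ) < (4:ℝ) ^ (2+α) := Real.rpow_pos_of_pos (by norm_num) _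
  have h4neg : (0:ℝ) ≤ (4:ℝ) ^ (-(2+α)) := (Real.rpow_pos_of_pos (by norm_num) _).le
  have h3neg : (0:ℝ) ≤ (3:ℝ) ^ (-(2+α)) := (Real.rpow_pos_of_pos (by norm_num) _).le
  refine ⟨40 * (4:ℝ) ^ (2+α), by nlinarith, ?_⟩
  have hainv : (40 * (4:ℝ) ^ (2+α))⁻¹ = (1/40) * (4:ℝ) ^ (-(2+α)) := by
    rw [mul_inv, Real.rpow_neg (by norm_num)]
    norm_num
  intro m n hm hn hmn x hx
  obtain ⟨b, hb0, hbm, hZeq⟩ := reduce α n m x hx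
  have hm0 : (0:ℝ) < m := by exact_mod_cast hm
  have hn0 : (0:ℝ) < n := by exact_mod_cast hn
  constructor
  · -- m < n case
    intro hlt
    have hdeq : max m n - min m n = n - m := by omega
    set d : ℕ := n - m with hddef
    have hd1 : 1 ≤ d := by omega
    have hD1 : (1:ℝ) ≤ (d:ℝ) := by exact_mod_cast hd1
    have hD0 : (0:ℝ) < (d:ℝ) := by linarith
    have hcast : ((d:ℕ):ℝ) = (n:ℝ) - m := by
      rw [hddef, Nat.cast_sub hlt.le]
    have hQ0 : (0:ℝ) ≤ ((n:ℝ) - m) ^ (-(1+α)) := Real.rpow_nonneg (by linarith) _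
    -- key rpow identity : D * (3D)^(-(2+α)) = 3^(-(2+α)) * D^(-(1+α))
    have hkey : (d:ℝ) * (3 * (d:ℝ)) ^ (-(2+α)) = (3:ℝ)^(-(2+α)) * ((d:ℝ))^(-(1+α)) := by
      rw [Real.mul_rpow (by norm_num) hD0.le,
        show -(2+α) = (-1) + (-(1+α)) by ring, Real.rpow_add hD0, Real.rpow_neg_one]
      field_simp
    constructor
    · -- lower
      have hlow := lowerA hα hm hn hmn (by omega) b hb0 hbm
      rw [hdeq] at hlow
      rw [hZeq]
      have h34 : (4:ℝ)^(-(2+α)) ≤ (3:ℝ)^(-(2+α)) :=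
        Real.rpow_le_rpow_of_nonpos (by norm_num) (by norm_num) (by linarith)
      calc (40 * (4:ℝ) ^ (2+α))⁻¹ * ((n:ℝ) - m) ^ (-(1+α))
          ≤ (3:ℝ)^(-(2+α)) * ((n:ℝ) - m) ^ (-(1+α)) := by
            rw [hainv]
            apply mul_le_mul_of_nonneg_right _ hQ0
            nlinarith
        _ = (d:ℝ) * (3 * (d:ℝ)) ^ (-(2+α)) := by rw [hkey, hcast]
        _ ≤ _ := hlow
    · -- upper
      have hup := upper hα hm hn hmn x hx
      rw [hdeq] at hup
      calc Zsq α n ((x.1:ℝ), (x.2:ℝ)) ≤ 20 * ((d:ℕ):ℝ) ^ (-(1+α)) := hup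
        _ ≤ 40 * (4:ℝ)^(2+α) * ((n:ℝ) - m) ^ (-(1+α)) := by
            rw [hcast]
            apply mul_le_mul_of_nonneg_right _ hQ0
            nlinarith
  · -- n < m case
    intro hlt
    have hdeq : max m n - min m n = m - n := by omega
    set d : ℕ := m - n with hddef
    have hd1 : 1 ≤ d := by omega
    have hD1 : (1:ℝ) ≤ (d:ℝ) := by exact_mod_cast hd1
    have hD0 : (0:ℝ) < (d:ℝ) := by linarith
    have hcast : ((d:ℕ):ℝ) = (m:ℝ) - n := by
      rw [hddef, Nat.cast_sub hlt.le]
    have hQ0 : (0:ℝ) < ((m:ℝ) - n) ^ (-(1+α)) := Real.rpow_pos_of_pos (by rw [← hcast]; exact hD0) _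
    have hP0 : (0:ℝ) < ((m:ℝ) - n) ^ (1+α) := Real.rpow_pos_of_pos (by rw [← hcast]; exact hD0) _
    -- V = (n/m) * Q
    have hVeq : (n:ℝ) / ((m:ℝ) * ((m:ℝ) - n) ^ (1+α))
        = ((n:ℝ)/(m:ℝ)) * ((m:ℝ) - n) ^ (-(1+α)) := by
      rw [Real.rpow_neg (by rw [← hcast]; exact hD0.le)]
      field_simp
    have hkey : (d:ℝ) * (3 * (d:ℝ)) ^ (-(2+α)) = (3:ℝ)^(-(2+α)) * ((d:ℝ))^(-(1+α)) := by
      rw [Real.mul_rpow (by norm_num) hD0.le,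
        show -(2+α) = (-1) + (-(1+α)) by ring, Real.rpow_add hD0, Real.rpow_neg_one]
      field_simp
    have hkey4 : (n:ℝ) * (4 * (d:ℝ)) ^ (-(2+α))
        = (4:ℝ)^(-(2+α)) * ((n:ℝ) * ((d:ℝ))⁻¹ * ((d:ℝ))^(-(1+α))) := by
      rw [Real.mul_rpow (by norm_num) hD0.le,
        show -(2+α) = (-1) + (-(1+α)) by ring, Real.rpow_add hD0, Real.rpow_neg_one]
      ring
    have hSQ : (0:ℝ) ≤ ((n:ℝ)/(m:ℝ)) * ((m:ℝ) - n) ^ (-(1+α)) := by positivity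
    constructor
    · -- lower
      rw [hZeq, hVeq]
      rcases le_or_gt m (2*n) with hc | hc
      · -- use lowerA
        have hlow := lowerA hα hm hn hmn (by omega) b hb0 hbm
        rw [hdeq] at hlow
        have h34 : (4:ℝ)^(-(2+α)) ≤ (3:ℝ)^(-(2+α)) :=
          Real.rpow_le_rpow_of_nonpos (by norm_num) (by norm_num) (by linarith)
        have hnm1 : (n:ℝ)/(m:ℝ) ≤ 1 := by
          rw [div_le_one hm0]
          exact_mod_cast hlt.le
        calc (40 * (4:ℝ) ^ (2+α))⁻¹ * (((n:ℝ)/(m:ℝ)) * ((m:ℝ) - n) ^ (-(1+α)))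
            ≤ (3:ℝ)^(-(2+α)) * (1 * ((m:ℝ) - n) ^ (-(1+α))) := by
              rw [hainv]
              apply mul_le_mul _ _ (by positivity) h3neg
              · nlinarith
              · exact mul_le_mul_of_nonneg_right hnm1 hQ0.le
          _ = (d:ℝ) * (3 * (d:ℝ)) ^ (-(2+α)) := by rw [one_mul, hkey, hcast]
          _ ≤ _ := hlow
      · -- use lowerB
        have hlow := lowerB hα hn (by omega) b hb0 hbm
        have hmd : (m:ℝ) ≤ 2 * (d:ℝ) := by
          have : (m:ℤ) ≤ 2 * (d:ℤ) := by omega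
          exact_mod_cast this
        have hinv : (m:ℝ)⁻¹ ≤ ((d:ℝ))⁻¹ := by
          apply inv_anti₀ hD0
          linarith
        calc (40 * (4:ℝ) ^ (2+α))⁻¹ * (((n:ℝ)/(m:ℝ)) * ((m:ℝ) - n) ^ (-(1+α)))
            ≤ (4:ℝ)^(-(2+α)) * (((n:ℝ)/(m:ℝ)) * ((m:ℝ) - n) ^ (-(1+α))) := by
              rw [hainv]
              apply mul_le_mul_of_nonneg_right _ hSQ
              nlinarith
          _ ≤ (4:ℝ)^(-(2+α)) * ((n:ℝ) * ((d:ℝ))⁻¹ * ((d:ℝ))^(-(1+α))) := by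
              apply mul_le_mul_of_nonneg_left _ h4neg
              rw [hcast] at hD0 hD1 ⊢
              rw [div_eq_mul_inv]
              apply mul_le_mul_of_nonneg_right _ hQ0.le
              apply mul_le_mul_of_nonneg_left _ hn0.le
              rw [← hcast] at hD0 ⊢
              exact hinv
          _ = (n:ℝ) * (4 * (d:ℝ)) ^ (-(2+α)) := hkey4.symm
          _ ≤ _ := hlow
    · -- upper
      rw [hVeq]
      rcases le_or_gt m (2*n) with hc | hc
      · have hup := upper hα hm hn hmn x hx
        rw [hdeq] at hup
        have hhalf : (1:ℝ)/2 ≤ (n:ℝ)/(m:ℝ) := by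
          rw [div_le_div_iff₀ (by norm_num) hm0]
          have : (m:ℝ) ≤ 2*n := by exact_mod_cast hc
          linarith
        calc Zsq α n ((x.1:ℝ), (x.2:ℝ)) ≤ 20 * ((d:ℕ):ℝ) ^ (-(1+α)) := hup
          _ ≤ 40 * (4:ℝ)^(2+α) * (((n:ℝ)/(m:ℝ)) * ((m:ℝ) - n) ^ (-(1+α))) := by
              rw [hcast]
              have e1 : 40 * (4:ℝ)^(2+α) * (((n:ℝ)/(m:ℝ)) * ((m:ℝ) - n) ^ (-(1+α)))
                  ≥ 40 * 1 * ((1/2) * ((m:ℝ) - n) ^ (-(1+α))) := by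
                apply mul_le_mul (by nlinarith) _ (by positivity) (by positivity)
                exact mul_le_mul_of_nonneg_right hhalf hQ0.le
              linarith
      · have hup := crude hα hn hlt x hx
        have hmd : (m:ℝ) ≤ 2 * (d:ℝ) := by
          have : (m:ℤ) ≤ 2 * (d:ℤ) := by omega
          exact_mod_cast this
        have hkeyC : (12 * (n:ℝ)) * ((d:ℕ):ℝ)^(-(2+α))
            = 12 * ((n:ℝ) * ((d:ℝ))⁻¹ * ((d:ℝ))^(-(1+α))) := by
          rw [show -(2+α) = (-1) + (-(1+α)) by ring, Real.rpow_add hD0, Real.rpow_neg_one]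
          ring
        have hmain : (n:ℝ) * ((d:ℝ))⁻¹ ≤ 2 * ((n:ℝ)/(m:ℝ)) := by
          rw [div_eq_mul_inv]
          have h2m : 2 * (m:ℝ)⁻¹ ≥ ((d:ℝ))⁻¹ := by
            calc ((d:ℝ))⁻¹ ≤ ((m:ℝ)/2)⁻¹ := inv_anti₀ (by linarith) (by linarith)
              _ = 2 * (m:ℝ)⁻¹ := by rw [inv_div]; rw [div_eq_mul_inv]
          calc (n:ℝ) * ((d:ℝ))⁻¹ ≤ (n:ℝ) * (2 * (m:ℝ)⁻¹) :=
                mul_le_mul_of_nonneg_left h2m hn0.le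
            _ = 2 * ((n:ℝ) * (m:ℝ)⁻¹) := by ring
        calc Zsq α n ((x.1:ℝ), (x.2:ℝ)) ≤ (12 * (n:ℝ)) * ((d:ℕ):ℝ)^(-(2+α)) := hup
          _ = 12 * ((n:ℝ) * ((d:ℝ))⁻¹ * ((d:ℝ))^(-(1+α))) := hkeyC
          _ ≤ 12 * (2 * ((n:ℝ)/(m:ℝ)) * ((d:ℝ))^(-(1+α))) := by
              apply mul_le_mul_of_nonneg_left _ (by norm_num)
              apply mul_le_mul_of_nonneg_right hmain (Real.rpow_nonneg hD0.le _)
          _ ≤ 40 * (4:ℝ)^(2+α) * (((n:ℝ)/(m:ℝ)) * ((m:ℝ) - n) ^ (-(1+α))) := by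
              rw [← hcast]
              have hq : (0:ℝ) ≤ ((n:ℝ)/(m:ℝ)) * ((d:ℝ))^(-(1+α)) := by positivity
              have : 12 * (2 * ((n:ℝ)/(m:ℝ)) * ((d:ℝ))^(-(1+α)))
                  = 24 * (((n:ℝ)/(m:ℝ)) * ((d:ℝ))^(-(1+α))) := by ring
              rw [this]
              nlinarith
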